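/- Let u be a self-divisible multiplicative-idempotent ultrafilter on ℕ (u·u = u and D(u) ∈ u). Then D(u) = D((u/u)·u) = D(u·(u/u)). -/
import Mathlib


/-- x·A = {x*a : a ∈ A} in ℕ+. -/
def pmul (x : ℕ+) (A : Set ℕ+) : Set ℕ+ := (x * ·) '' A

/-- xℕ, the set of positive multiples of x. -/
def mulsOf (x : ℕ+) : Set ℕ+ := {n | x ∣ n}

/-- D(u) = {x : xℕ ∈ u}. -/
def Dset (u : Ultrafilter ℕ+) : Set ℕ+ := {x | mulsOf x ∈ u}

/-- v strongly divides u: D(u) ∈ v. -/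
def SDvd (v u : Ultrafilter ℕ+) : Prop := Dset u ∈ v

/-- Membership in the quotient u/v:  A ∈ u/v iff {x : x·A ∈ u} ∈ v. -/
def quotMem (u v : Ultrafilter ℕ+) (A : Set ℕ+) : Prop := {x | pmul x A ∈ u} ∈ v

attribute [local instance] Ultrafilter.mul

open Filter

lemma memMul (U V : Ultrafilter ℕ+) (A : Set ℕ+) :
    A ∈ U * V ↔ {k | {n | k * n ∈ A} ∈ V} ∈ U :=
  Ultrafilter.eventually_mul U V (· ∈ A)

lemma pmul_mulsOf (k d : ℕ+) : pmul k (mulsOf d) = mulsOf (k * d) := by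
  ext n
  constructor
  · rintro ⟨m, hm, rfl⟩
    exact mul_dvd_mul_left k hm
  · rintro ⟨t, rfl⟩
    exact ⟨d * t, Dvd.intro t rfl, (mul_assoc k d t).symm⟩

lemma dq_sub {u q : Ultrafilter ℕ+} (hq : ∀ A : Set ℕ+, A ∈ q ↔ quotMem u u A) :
    Dset q ⊆ Dset u := by
  intro d hd
  have h1 : {j : ℕ+ | pmul j (mulsOf d) ∈ u} ∈ u := (hq _).mp hd
  obtain ⟨j, hj⟩ := Ultrafilter.nonempty_of_mem h1
  rw [Set.mem_setOf_eq, pmul_mulsOf] at hj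
  exact mem_of_superset hj fun n hn => (Dvd.intro_left j rfl).trans hn

lemma dset_mul_closed {u : Ultrafilter ℕ+} (hid : u * u = u) {d e : ℕ+}
    (hd : d ∈ Dset u) (he : e ∈ Dset u) : d * e ∈ Dset u := by
  have : mulsOf (d * e) ∈ u * u := by
    rw [memMul]
    refine mem_of_superset hd fun k hk => mem_of_superset he fun n hn => ?_
    exact mul_dvd_mul hk hn
  rwa [hid] at this

lemma dvd_iff_cofactor {x k d e : ℕ+} (hg : PNat.gcd x k = d) (hde : d * e = x)
    (n : ℕ+) : x ∣ k * n ↔ e ∣ n := by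
  have hD : (d : ℕ) = Nat.gcd (x : ℕ) (k : ℕ) := by
    rw [← hg]; rfl
  have hdk : (d : ℕ) ∣ (k : ℕ) := hD ▸ Nat.gcd_dvd_right _ _
  obtain ⟨k', hk'⟩ := hdk
  have hX : (x : ℕ) = (d : ℕ) * (e : ℕ) := by
    rw [← hde]; push_cast; ring
  have hdpos : 0 < (d : ℕ) := d.pos
  have hcop : Nat.Coprime (e : ℕ) k' := by
    have h1 : (x : ℕ) / Nat.gcd (x : ℕ) (k : ℕ) = (e : ℕ) := by
      rw [← hD, hX, Nat.mul_div_cancel_left _ hdpos]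
    have h2 : (k : ℕ) / Nat.gcd (x : ℕ) (k : ℕ) = k' := by
      rw [← hD, hk', Nat.mul_div_cancel_left _ hdpos]
    have := Nat.coprime_div_gcd_div_gcd (m := (x : ℕ)) (n := (k : ℕ))
      (Nat.gcd_pos_of_pos_left _ x.pos)
    rwa [h1, h2] at this
  rw [PNat.dvd_iff, PNat.dvd_iff, PNat.mul_coe, hX, hk']
  constructor
  · intro h
    have h' : (e : ℕ) ∣ k' * (n : ℕ) := by
      have : (d : ℕ) * (e : ℕ) ∣ (d : ℕ) * (k' * (n : ℕ)) := by
        rwa [← mul_assoc]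
      exact (mul_dvd_mul_iff_left (by positivity : (d:ℕ) ≠ 0)).mp this
    exact hcop.dvd_of_dvd_mul_left h'
  · intro h
    calc (d : ℕ) * (e : ℕ) ∣ ((d : ℕ) * k') * (n : ℕ) :=
          mul_dvd_mul (dvd_mul_right _ _) h
      _ = _ := rfl

lemma factor {V W : Ultrafilter ℕ+} {x : ℕ+} (hx : x ∈ Dset (V * W)) :
    ∃ d e : ℕ+, d * e = x ∧ d ∈ Dset V ∧ e ∈ Dset W := by
  have hS : {k : ℕ+ | {n : ℕ+ | x ∣ k * n} ∈ W} ∈ V := (memMul V W (mulsOf x)).mp hx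
  have hfin : Set.Finite {d : ℕ+ | d ∣ x} :=
    (Set.finite_Icc 1 x).subset fun d hd => ⟨d.one_le, PNat.le_of_dvd hd⟩
  have hmem : {d : ℕ+ | d ∣ x} ∈ Ultrafilter.map (fun k => PNat.gcd x k) V := by
    rw [Ultrafilter.mem_map]
    exact mem_of_superset univ_mem fun k _ => PNat.gcd_dvd_left x k
  obtain ⟨d, hdx, hpure⟩ := Ultrafilter.eq_pure_of_finite_mem hfin hmem
  have hgc : {k : ℕ+ | PNat.gcd x k = d} ∈ V := by
    have h1 : {d} ∈ Ultrafilter.map (fun k => PNat.gcd x k) V := by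
      rw [hpure]; exact Filter.singleton_mem_pure
    rw [Ultrafilter.mem_map] at h1
    exact h1
  obtain ⟨k0, hk0⟩ := Ultrafilter.nonempty_of_mem (inter_mem hS hgc)
  obtain ⟨hk0S, hk0g⟩ := hk0
  obtain ⟨e, he⟩ := hdx
  refine ⟨d, e, he.symm, ?_, ?_⟩
  · exact mem_of_superset hgc fun k hk => hk ▸ PNat.gcd_dvd_right x k
  · have hset : {n : ℕ+ | x ∣ k0 * n} = mulsOf e := by
      ext n
      exact dvd_iff_cofactor hk0g he.symm n
    show mulsOf e ∈ W
    rwa [← hset]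

theorem stmt5 (u : Ultrafilter ℕ+) (hu : Dset u ∈ u) (hid : u * u = u)
    (q : Ultrafilter ℕ+) (hq : ∀ A : Set ℕ+, A ∈ q ↔ quotMem u u A) :
    Dset u = Dset (q * u) ∧ Dset u = Dset (u * q) := by
  have hqu : Dset q ⊆ Dset u := dq_sub hq
  constructor
  · apply Set.Subset.antisymm
    · intro x hx
      show mulsOf x ∈ q * u
      rw [memMul]
      refine mem_of_superset univ_mem fun k _ => ?_
      exact mem_of_superset hx fun n hn => hn.mul_left k
    · intro x hx
      obtain ⟨d, e, hde, hd, he⟩ := factor hx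
      have := dset_mul_closed hid (hqu hd) he
      rwa [hde] at this
  · apply Set.Subset.antisymm
    · intro x hx
      show mulsOf x ∈ u * q
      rw [memMul]
      refine mem_of_superset hx fun k hk => ?_
      refine mem_of_superset univ_mem fun n _ => ?_
      exact hk.mul_right n
    · intro x hx
      obtain ⟨d, e, hde, hd, he⟩ := factor hx
      have := dset_mul_closed hid hd (hqu he)
      rwa [hde] at this
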